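/- Let S be a nonempty semigroup such that S \ E(S) is finite, and let T be an S-valued sequence of length |S \ E(S)| with Π(T) ∩ E(S) = ∅. Then Π(T) = S \ E(S). -/
import Mathlib


/-- Product, in order, of the nonempty list `a :: l` in a semigroup. -/
def sprod {S : Type*} [Mul S] (a : S) (l : List S) : S := l.foldl (· * ·) a

/-- `pow1 x n = x^(n+1)`: the `(n+1)`-st power of `x` in a semigroup. -/
def pow1 {S : Type*} [Mul S] (x : S) : ℕ → S := fun n => Nat.rec x (fun _ y => y * x) n

/-- `Π(T)`: the set of products, in order, of nonempty lists which are
permutations of order-preserving sublists of `T`. -/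
def PiSet {S : Type*} [Mul S] (T : List S) : Set S :=
  {s | ∃ u : List S, u.Sublist T ∧ ∃ a l, (a :: l).Perm u ∧ sprod a l = s}

/-- `A(L)`: the set of products, in order, of nonempty order-preserving sublists of `L`. -/
def ASet {S : Type*} [Mul S] (L : List S) : Set S :=
  {s | ∃ a l, (a :: l).Sublist L ∧ sprod a l = s}

/-- `HasIndexPeriod x r p` says that `r` is the index of `x` (the least `r > 0` such
that `x^r = x^t` for some positive `t ≠ r`) and `p` is the period of `x` (the least
`p > 0` with `x^(r+p) = x^r`). Powers are expressed via `pow1 x (n-1) = x^n`. -/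
def HasIndexPeriod {S : Type*} [Mul S] (x : S) (r p : ℕ) : Prop :=
  (0 < r ∧ (∃ t, 0 < t ∧ t ≠ r ∧ pow1 x (t - 1) = pow1 x (r - 1)) ∧
    ∀ r', 0 < r' → (∃ t, 0 < t ∧ t ≠ r' ∧ pow1 x (t - 1) = pow1 x (r' - 1)) → r ≤ r') ∧
  (0 < p ∧ pow1 x (r + p - 1) = pow1 x (r - 1) ∧
    ∀ p', 0 < p' → pow1 x (r + p' - 1) = pow1 x (r - 1) → p ≤ p')

section Aux
variable {S : Type*} [Semigroup S]

lemma sprod_append_single (a : S) (l : List S) (t : S) :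
    sprod a (l ++ [t]) = sprod a l * t := by
  simp [sprod]

lemma PiSet_mono {L₁ L₂ : List S} (h : L₁.Sublist L₂) : PiSet L₁ ⊆ PiSet L₂ := by
  rintro s ⟨u, hu, a, l, hperm, hprod⟩
  exact ⟨u, hu.trans h, a, l, hperm, hprod⟩

lemma self_mem_PiSet_append (L : List S) (t : S) : t ∈ PiSet (L ++ [t]) :=
  ⟨[t], by simpa using List.sublist_append_right L [t], t, [], List.Perm.refl _, rfl⟩

lemma mul_mem_PiSet_append {L : List S} {s : S} (hs : s ∈ PiSet L) (t : S) :
    s * t ∈ PiSet (L ++ [t]) := by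
  obtain ⟨u, hu, a, l, hperm, hprod⟩ := hs
  refine ⟨u ++ [t], hu.append (List.Sublist.refl [t]), a, l ++ [t], ?_, ?_⟩
  · have : (a :: l) ++ [t] = a :: (l ++ [t]) := by simp
    rw [← this]
    exact hperm.append_right [t]
  · rw [sprod_append_single, hprod]

lemma pow1_succ (t : S) (n : ℕ) : pow1 t (n + 1) = pow1 t n * t := rfl

lemma pow1_mul (t : S) (m n : ℕ) : pow1 t m * pow1 t n = pow1 t (m + n + 1) := by
  induction n with
  | zero => rfl
  | succ n ih =>
    have e : m + (n + 1) + 1 = (m + n + 1) + 1 := by omega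
    rw [pow1_succ, ← mul_assoc, ih, e]
    exact (pow1_succ t (m + n + 1)).symm

lemma pow1_period (t : S) {a d : ℕ} (h : pow1 t (a + d) = pow1 t a) :
    ∀ k, pow1 t (a + k + d) = pow1 t (a + k) := by
  intro k
  induction k with
  | zero => simp only [Nat.add_zero]; exact h
  | succ k ih =>
    have e1 : a + (k + 1) + d = (a + k + d) + 1 := by omega
    have e2 : a + (k + 1) = (a + k) + 1 := by omega
    rw [e1, e2, pow1_succ, pow1_succ, ih]

lemma pow1_period_mul (t : S) {a d : ℕ} (h : pow1 t (a + d) = pow1 t a) :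
    ∀ j k, pow1 t (a + k + j * d) = pow1 t (a + k) := by
  intro j
  induction j with
  | zero => simp
  | succ j ih =>
    intro k
    have e1 : a + k + (j + 1) * d = a + (k + j * d) + d := by ring
    have e2 : a + k + j * d = a + (k + j * d) := by ring
    rw [e1, pow1_period t h, ← e2, ih]

lemma exists_idem_pow (t : S) {P : Set S} (hP : P.Finite)
    (hpow : ∀ k, pow1 t k ∈ P) :
    ∃ m, pow1 t m * pow1 t m = pow1 t m := by
  have hmaps : Set.MapsTo (pow1 t) (Set.univ : Set ℕ) P := fun k _ => hpow k
  obtain ⟨x, -, y, -, hxy, hfx⟩ :=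
    Set.Infinite.exists_ne_map_eq_of_mapsTo Set.infinite_univ hmaps hP
  -- get a < b with pow1 t a = pow1 t b
  obtain ⟨a, b, hab, heq⟩ : ∃ a b : ℕ, a < b ∧ pow1 t b = pow1 t a := by
    rcases lt_or_gt_of_ne hxy with h | h
    · exact ⟨x, y, h, hfx.symm⟩
    · exact ⟨y, x, h, hfx⟩
  set d := b - a with hd
  have hd1 : 1 ≤ d := by omega
  have hper : pow1 t (a + d) = pow1 t a := by
    have : a + d = b := by omega
    rw [this, heq]
  obtain ⟨M, hM1, hM2⟩ : ∃ M, a + 1 ≤ M ∧ (a + 1) * d = M := by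
    refine ⟨(a + 1) * d, ?_, rfl⟩
    calc a + 1 = (a + 1) * 1 := (Nat.mul_one _).symm
      _ ≤ (a + 1) * d := Nat.mul_le_mul_left _ hd1
  refine ⟨M - 1, ?_⟩
  rw [pow1_mul]
  have e1 : M - 1 + (M - 1) + 1 = a + (M - 1 - a) + (a + 1) * d := by
    rw [hM2]; omega
  have e2 : M - 1 = a + (M - 1 - a) := by omega
  rw [e1, pow1_period_mul t hper, ← e2]

end Aux

/-- An idempotent-product free sequence of the maximal length `|S \ E(S)|`
realizes every non-idempotent as a product: `Π(T) = S \ E(S)`. -/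
theorem stmt_5 {S : Type*} [Semigroup S] [Nonempty S]
    (hfin : {x : S | x * x ≠ x}.Finite)
    (T : List S) (hlen : T.length = {x : S | x * x ≠ x}.ncard)
    (hfree : PiSet T ∩ {e : S | e * e = e} = ∅) :
    PiSet T = {x : S | x * x ≠ x} := by
  -- Π(T) ⊆ S \ E(S)
  have hsub : PiSet T ⊆ {x : S | x * x ≠ x} := by
    intro s hs
    intro hcon
    have : s ∈ PiSet T ∩ {e : S | e * e = e} := ⟨hs, hcon⟩
    rw [hfree] at this
    exact this
  -- finiteness of prefix product sets
  have hPfin : ∀ L : List S, L.Sublist T → (PiSet L).Finite :=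
    fun L hL => hfin.subset ((PiSet_mono hL).trans hsub)
  -- no prefix product set meets the idempotents
  have hPfree : ∀ L : List S, L.Sublist T → ∀ s ∈ PiSet L, s * s ≠ s := by
    intro L hL s hs hcon
    have : s ∈ PiSet T ∩ {e : S | e * e = e} := ⟨PiSet_mono hL hs, hcon⟩
    rw [hfree] at this
    exact this
  -- growth: the prefix product sets grow strictly
  have hgrow : ∀ i ≤ T.length, i ≤ (PiSet (T.take i)).ncard := by
    intro i
    induction i with
    | zero => intro _; exact Nat.zero_le _
    | succ i ih =>
      intro hi
      have hiT : i < T.length := by omega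
      have ihi := ih (by omega)
      set t := T.get ⟨i, hiT⟩ with ht
      have htake : T.take (i + 1) = T.take i ++ [t] := by
        rw [List.take_succ]
        congr 1
        simp [List.getElem?_eq_getElem hiT, ht]
      have hsub1 : (PiSet (T.take i)) ⊆ PiSet (T.take (i + 1)) :=
        PiSet_mono (by rw [htake]; exact List.sublist_append_left _ _)
      -- strictness
      have hstrict : PiSet (T.take i) ≠ PiSet (T.take (i + 1)) := by
        intro heq
        have htmem : t ∈ PiSet (T.take i) := by
          rw [heq, htake]; exact self_mem_PiSet_append _ _
        have hmul : ∀ s ∈ PiSet (T.take i), s * t ∈ PiSet (T.take i) := by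
          intro s hs
          rw [heq, htake]
          exact mul_mem_PiSet_append hs t
        have hpow : ∀ k, pow1 t k ∈ PiSet (T.take i) := by
          intro k
          induction k with
          | zero => exact htmem
          | succ k ihk => rw [pow1_succ]; exact hmul _ ihk
        obtain ⟨m, hm⟩ := exists_idem_pow t
          (hPfin (T.take i) (List.take_sublist i T)) hpow
        exact hPfree (T.take i) (List.take_sublist i T) _ (hpow m) hm
      have hssub : PiSet (T.take i) ⊂ PiSet (T.take (i + 1)) :=
        ⟨hsub1, fun h => hstrict (le_antisymm hsub1 h)⟩
      have := Set.ncard_lt_ncard hssub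
        (hPfin (T.take (i + 1)) (List.take_sublist _ T))
      omega
  have hfinal := hgrow T.length le_rfl
  rw [List.take_length] at hfinal
  exact Set.eq_of_subset_of_ncard_le hsub (by omega) hfin
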